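/- Let k > 2 and y ∈ ℝⁿ with |y| < 1, and let W be the vector field W(x) = -(1/k)·(((1-2⟨x,y⟩+|y|²)/|x-y|²)^{k/2} - 1)·(x-y) + (1/(k-2))·(((1-2⟨x,y⟩+|y|²)/|x-y|²)^{(k-2)/2} - 1)·y. Then |x-y|^{k-1} · (W(x) + (1-|y|²)^{k/2}·(x-y)/(k·|x-y|^k)) → 0 as x → y. -/

import Mathlib

open scoped InnerProductSpace Topology

theorem stmt_6 (n k : ℕ) (hk : 2 < k) (y : EuclideanSpace ℝ (Fin n)) (hy : ‖y‖ < 1)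
    (W : EuclideanSpace ℝ (Fin n) → EuclideanSpace ℝ (Fin n))
    (hW : ∀ x, W x =
      (-(1 / (k : ℝ)) * (((1 - 2 * ⟪x, y⟫_ℝ + ‖y‖ ^ 2) / ‖x - y‖ ^ 2) ^ ((k : ℝ) / 2) - 1)) • (x - y)
      + ((1 / ((k : ℝ) - 2)) * (((1 - 2 * ⟪x, y⟫_ℝ + ‖y‖ ^ 2) / ‖x - y‖ ^ 2) ^ (((k : ℝ) - 2) / 2) - 1)) • y) :
    Filter.Tendsto
      (fun x => ‖x - y‖ ^ (k - 1) •
        (W x + ((1 - ‖y‖ ^ 2) ^ ((k : ℝ) / 2) / ((k : ℝ) * ‖x - y‖ ^ k)) • (x - y)))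
      (𝓝[≠] y) (𝓝 0) := by
  obtain ⟨m, rfl⟩ : ∃ m, k = m + 3 := ⟨k - 3, by omega⟩
  set a : ℝ := 1 - ‖y‖ ^ 2 with ha_def
  have ha : 0 < a := by nlinarith [norm_nonneg y]
  set K : ℝ := ((m + 3 : ℕ) : ℝ) / 2 with hK_def
  set K2 : ℝ := (((m + 3 : ℕ) : ℝ) - 2) / 2 with hK2_def
  set A : EuclideanSpace ℝ (Fin n) → ℝ := fun x => 1 - 2 * ⟪x, y⟫_ℝ + ‖y‖ ^ 2 with hA_def
  have hAcont : Continuous A := by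
    rw [hA_def]
    exact (continuous_const.sub
      (continuous_const.mul (continuous_id.inner continuous_const))).add continuous_const
  have hAy : A y = a := by
    simp only [hA_def, ha_def, real_inner_self_eq_norm_sq]
    ring
  have hAy0 : A y ≠ 0 := by rw [hAy]; exact ha.ne'
  have hm3 : ((m + 3 : ℕ) : ℝ) ≠ 0 := by positivity
  have hm2 : ((m + 3 : ℕ) : ℝ) - 2 ≠ 0 := by push_cast; nlinarith [Nat.cast_nonneg (α := ℝ) m]
  set φ : EuclideanSpace ℝ (Fin n) → ℝ :=
    fun x => (a ^ K - A x ^ K + ‖x - y‖ ^ (m + 3)) / ((m + 3 : ℕ) : ℝ) with hφ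
  set ψ : EuclideanSpace ℝ (Fin n) → ℝ :=
    fun x => (A x ^ K2 * ‖x - y‖ - ‖x - y‖ ^ (m + 2)) / (((m + 3 : ℕ) : ℝ) - 2) with hψ
  have hφt : Filter.Tendsto φ (𝓝 y) (𝓝 0) := by
    have hcont : ContinuousAt φ y := by
      apply ContinuousAt.div_const
      apply ContinuousAt.add
      · exact continuousAt_const.sub ((hAcont.continuousAt).rpow_const (Or.inl hAy0))
      · exact (((continuous_id.sub continuous_const).norm.pow _)).continuousAt
    have h0 : φ y = 0 := by simp [hφ, hAy]
    simpa [h0] using hcont.tendsto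
  have hψt : Filter.Tendsto ψ (𝓝 y) (𝓝 0) := by
    have hcont : ContinuousAt ψ y := by
      apply ContinuousAt.div_const
      apply ContinuousAt.sub
      · exact ((hAcont.continuousAt).rpow_const (Or.inl hAy0)).mul
          ((continuous_id.sub continuous_const).norm.continuousAt)
      · exact (((continuous_id.sub continuous_const).norm.pow _)).continuousAt
    have h0 : ψ y = 0 := by simp [hψ, hAy]
    simpa [h0] using hcont.tendsto
  apply squeeze_zero_norm' (a := fun x => |φ x| + |ψ x| * ‖y‖)
  · have hevA : ∀ᶠ x in 𝓝[≠] y, 0 < A x :=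
      ((hAcont.continuousAt).eventually (eventually_gt_nhds (show (0:ℝ) < A y from hAy ▸ ha))).filter_mono
        nhdsWithin_le_nhds
    filter_upwards [hevA, self_mem_nhdsWithin] with x hAx hx
    have hx' : x ≠ y := hx
    have hxy : x - y ≠ 0 := sub_ne_zero.mpr hx'
    set r := ‖x - y‖ with hr_def
    have hr : 0 < r := norm_pos_iff.mpr hxy
    have h2k : ((r ^ 2 : ℝ)) ^ K = r ^ (m + 3) := by
      rw [← Real.rpow_natCast r 2, ← Real.rpow_mul (norm_nonneg _),
        show ((2 : ℕ) : ℝ) * K = ((m + 3 : ℕ) : ℝ) by rw [hK_def]; push_cast; ring]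
      exact Real.rpow_natCast r (m + 3)
    have h2k2 : ((r ^ 2 : ℝ)) ^ K2 = r ^ (m + 1) := by
      rw [← Real.rpow_natCast r 2, ← Real.rpow_mul (norm_nonneg _),
        show ((2 : ℕ) : ℝ) * K2 = ((m + 1 : ℕ) : ℝ) by rw [hK2_def]; push_cast; ring]
      exact Real.rpow_natCast r (m + 1)
    have hAe : (1 - 2 * ⟪x, y⟫_ℝ + ‖y‖ ^ 2) = A x := rfl
    have hdiv1 : ((A x) / r ^ 2) ^ K = A x ^ K / r ^ (m + 3) := by
      rw [Real.div_rpow hAx.le (by positivity), h2k]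
    have hdiv2 : ((A x) / r ^ 2) ^ K2 = A x ^ K2 / r ^ (m + 1) := by
      rw [Real.div_rpow hAx.le (by positivity), h2k2]
    have hkey : r ^ (m + 3 - 1) •
        (W x + (a ^ K / (((m + 3 : ℕ) : ℝ) * r ^ (m + 3))) • (x - y))
        = φ x • (r⁻¹ • (x - y)) + ψ x • y := by
      rw [hW x, hAe, hdiv1, hdiv2]
      have hsub : m + 3 - 1 = m + 2 := rfl
      rw [hsub]
      have hmod : ∀ (c d e : ℝ),
          r ^ (m + 2) • (c • (x - y) + d • y + e • (x - y))
          = (r ^ (m + 2) * c + r ^ (m + 2) * e) • (x - y) + (r ^ (m + 2) * d) • y := by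
        intro c d e
        module
      rw [hmod, smul_smul]
      congr 1
      · congr 1
        simp only [hφ]
        rw [← hr_def]
        generalize A x ^ K = P
        generalize a ^ K = c0
        rw [show r ^ (m + 3) = r * r ^ (m + 2) by ring]
        generalize hRdef : r ^ (m + 2) = R
        have hR0 : R ≠ 0 := hRdef ▸ pow_ne_zero _ hr.ne'
        have hc1 : (1 : ℝ) + (m : ℝ) ≠ 0 := by positivity
        have hc3 : (3 : ℝ) + (m : ℝ) ≠ 0 := by positivity
        field_simp
        ring
      · congr 1
        simp only [hψ]
        rw [← hr_def]
        generalize A x ^ K2 = Q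
        rw [show r ^ (m + 2) = r * r ^ (m + 1) by ring]
        generalize hRdef : r ^ (m + 1) = R
        have hR0 : R ≠ 0 := hRdef ▸ pow_ne_zero _ hr.ne'
        have hc1 : (1 : ℝ) + (m : ℝ) ≠ 0 := by positivity
        have hc3 : (3 : ℝ) + (m : ℝ) ≠ 0 := by positivity
        field_simp
    have hu : ‖r⁻¹ • (x - y)‖ = 1 := by
      rw [norm_smul, norm_inv, Real.norm_eq_abs, abs_of_pos hr, inv_mul_cancel₀ hr.ne']
    calc ‖r ^ (m + 3 - 1) •
        (W x + (a ^ K / (((m + 3 : ℕ) : ℝ) * r ^ (m + 3))) • (x - y))‖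
        = ‖φ x • (r⁻¹ • (x - y)) + ψ x • y‖ := by rw [hkey]
      _ ≤ ‖φ x • (r⁻¹ • (x - y))‖ + ‖ψ x • y‖ := norm_add_le _ _
      _ = |φ x| + |ψ x| * ‖y‖ := by
          rw [norm_smul, hu, mul_one, norm_smul, Real.norm_eq_abs, Real.norm_eq_abs]
  · have h : Filter.Tendsto (fun x => |φ x| + |ψ x| * ‖y‖) (𝓝[≠] y)
        (𝓝 (|(0 : ℝ)| + |(0 : ℝ)| * ‖y‖)) :=
      Filter.Tendsto.mono_left ((hφt.abs).add ((hψt.abs).mul_const ‖y‖)) nhdsWithin_le_nhds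
    simpa using h
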